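/- arXiv:1505.02528 — 9 statements merged into one kernel-verified Lean document; each statement's English description precedes it below -/
import Mathlib

section
/- Let m be even and q a positive integer. If the m-th order n-dimensional Hankel tensor H_m generated by h ∈ ℝ^{m(n-1)+1} is positive semi-definite (i.e., H_m x^m ≥ 0 for all x ∈ ℝ^n), then the (qm)-th order k-dimensional Hankel tensor H_{qm} with the same generating vector h, where n = q(k-1)+1, is also positive semi-definite. -/
open Finset

theorem stmt4 (m q k n : ℕ) (hme : Even m) (hm : 0 < m) (hq : 0 < q) (hk : 0 < k)
    (hn : n = q * (k - 1) + 1) (h : ℕ → ℝ)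
    (hpsd : ∀ x : Fin n → ℝ,
      0 ≤ ∑ i : Fin m → Fin n, h (∑ j, (i j : ℕ)) * ∏ j, x (i j)) :
    ∀ y : Fin k → ℝ,
      0 ≤ ∑ i : Fin (q * m) → Fin k, h (∑ j, (i j : ℕ)) * ∏ j, y (i j) := by
  intro y
  -- every q-fold sum of indices below k is below n
  have hbound : ∀ t : Fin q → Fin k, (∑ l, (t l : ℕ)) < n := by
    intro t
    rw [hn]
    have h1 : ∑ l, (t l : ℕ) ≤ ∑ _l : Fin q, (k - 1) :=
      Finset.sum_le_sum fun l _ => Nat.le_sub_one_of_lt (t l).isLt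
    have h2 : ∑ _l : Fin q, (k - 1) = q * (k - 1) := by simp [mul_comm]
    omega
  -- the "fiber" map
  set g : (Fin m → Fin q → Fin k) → (Fin m → Fin n) :=
    fun T j => ⟨∑ l, (T j l : ℕ), hbound (T j)⟩ with hg
  -- the q-fold convolution of y
  set x : Fin n → ℝ := fun s =>
    ∑ t ∈ univ.filter (fun t : Fin q → Fin k => (∑ l, (t l : ℕ)) = (s : ℕ)),
      ∏ l, y (t l) with hx
  -- the common middle expression
  have key : ∑ i : Fin m → Fin n, h (∑ j, (i j : ℕ)) * ∏ j, x (i j)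
      = ∑ T : Fin m → Fin q → Fin k,
          h (∑ j, ∑ l, (T j l : ℕ)) * ∏ j, ∏ l, y (T j l) := by
    have expand : ∀ i : Fin m → Fin n, ∏ j, x (i j)
        = ∑ T ∈ Fintype.piFinset (fun j =>
            univ.filter (fun t : Fin q → Fin k => (∑ l, (t l : ℕ)) = ((i j : ℕ)))),
            ∏ j, ∏ l, y (T j l) := by
      intro i
      rw [hx]
      exact Finset.prod_univ_sum _ _
    calc ∑ i : Fin m → Fin n, h (∑ j, (i j : ℕ)) * ∏ j, x (i j)
        = ∑ i : Fin m → Fin n, ∑ T ∈ univ.filter (fun T => g T = i),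
            h (∑ j, ∑ l, (T j l : ℕ)) * ∏ j, ∏ l, y (T j l) := by
          refine Finset.sum_congr rfl fun i _ => ?_
          rw [expand i, Finset.mul_sum]
          refine Finset.sum_congr ?_ ?_
          · ext T
            simp only [Fintype.mem_piFinset, Finset.mem_filter, Finset.mem_univ, true_and,
              hg, funext_iff, Fin.ext_iff]
          · intro T hT
            simp only [Finset.mem_filter, Finset.mem_univ, true_and, hg, funext_iff,
              Fin.ext_iff] at hT
            congr 1
            exact congrArg h (Finset.sum_congr rfl fun j _ => (hT j).symm)
      _ = ∑ T : Fin m → Fin q → Fin k,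
            h (∑ j, ∑ l, (T j l : ℕ)) * ∏ j, ∏ l, y (T j l) :=
          Finset.sum_fiberwise _ _ _
  -- reindex target sum via Fin (q*m) ≃ Fin m × Fin q
  have e0 : Fin (q * m) ≃ Fin m × Fin q :=
    (finCongr (mul_comm q m)).trans finProdFinEquiv.symm
  have reindex : ∑ i : Fin (q * m) → Fin k, h (∑ j, (i j : ℕ)) * ∏ j, y (i j)
      = ∑ T : Fin m → Fin q → Fin k,
          h (∑ j, ∑ l, (T j l : ℕ)) * ∏ j, ∏ l, y (T j l) := by
    refine Fintype.sum_equiv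
      ((Equiv.arrowCongr e0 (Equiv.refl (Fin k))).trans (Equiv.curry _ _ _))
      _ _ fun i => ?_
    simp only [Equiv.trans_apply, Equiv.arrowCongr_apply, Equiv.curry_apply,
      Function.curry_apply, Equiv.refl_apply, Function.comp_apply, Equiv.coe_refl, id_eq]
    congr 1
    · congr 1
      rw [← Fintype.sum_prod_type',
        ← Equiv.sum_comp e0 (fun p : Fin m × Fin q => ((i (e0.symm (p.1, p.2))) : ℕ))]
      simp
    · rw [← Fintype.prod_prod_type',
        ← Equiv.prod_comp e0 (fun p : Fin m × Fin q => y (i (e0.symm (p.1, p.2))))]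
      simp
  rw [reindex, ← key]
  exact hpsd x
end

section
/- Let m be even and q a positive integer. If the m-th order n-dimensional Hankel tensor H_m generated by h is positive definite (H_m x^m > 0 for all nonzero real x), then the (qm)-th order k-dimensional Hankel tensor H_{qm} with the same generating vector, where n = q(k-1)+1, is also positive definite. -/
open Polynomial

theorem stmt5 (m q k n : ℕ) (hme : Even m) (hm : 0 < m) (hq : 0 < q) (hk : 0 < k)
    (hn : n = q * (k - 1) + 1) (h : ℕ → ℝ)
    (hpd : ∀ x : Fin n → ℝ, x ≠ 0 →
      0 < ∑ i : Fin m → Fin n, h (∑ j, (i j : ℕ)) * ∏ j, x (i j)) :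
    ∀ y : Fin k → ℝ, y ≠ 0 →
      0 < ∑ i : Fin (q * m) → Fin k, h (∑ j, (i j : ℕ)) * ∏ j, y (i j) := by
  intro y hy
  have hbound : ∀ g : Fin q → Fin k, (∑ j, (g j : ℕ)) < n := by
    intro g
    rw [hn, Nat.lt_succ_iff]
    calc ∑ j, (g j : ℕ) ≤ ∑ _j : Fin q, (k - 1) :=
          Finset.sum_le_sum (fun j _ => Nat.le_pred_of_lt (g j).isLt)
      _ = q * (k - 1) := by simp [Finset.sum_const, mul_comm]
  set x : Fin n → ℝ :=
    fun s => ∑ g : Fin q → Fin k, if (∑ j, (g j : ℕ)) = (s : ℕ) then ∏ j, y (g j) else 0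
    with hxdef
  have hxne : x ≠ 0 := by
    intro hx0
    set P : ℝ[X] := ∑ j : Fin k, Polynomial.C (y j) * X ^ (j : ℕ) with hP
    have hcoeffP : ∀ j : Fin k, P.coeff (j : ℕ) = y j := by
      intro j
      rw [hP, finset_sum_coeff]
      rw [Fintype.sum_eq_single j]
      · simp [coeff_C_mul, coeff_X_pow]
      · intro b hb
        rw [coeff_C_mul, coeff_X_pow, if_neg, mul_zero]
        exact fun hc => hb (Fin.ext hc.symm)
    have hprod : P ^ q = ∑ g : Fin q → Fin k,
        Polynomial.C (∏ j, y (g j)) * X ^ (∑ j, (g j : ℕ)) := by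
      have : P ^ q = ∏ _j : Fin q, P := by
        simp [Finset.prod_const]
      rw [this, hP]
      rw [Finset.prod_univ_sum]
      apply Finset.sum_congr rfl
      intro g _
      rw [Finset.prod_mul_distrib, ← map_prod, Finset.prod_pow_eq_pow_sum]
    have hpq0 : P ^ q = 0 := by
      ext s
      rw [hprod, finset_sum_coeff, coeff_zero]
      simp only [coeff_C_mul, coeff_X_pow, mul_ite, mul_one, mul_zero]
      by_cases hs : s < n
      · have h3 : (∑ g : Fin q → Fin k, if s = ∑ j, (g j : ℕ) then ∏ j, y (g j) else 0)
            = x ⟨s, hs⟩ := Finset.sum_congr rfl fun g _ => by simp [eq_comm]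
        rw [h3, hx0, Pi.zero_apply]
      · apply Finset.sum_eq_zero
        intro g _
        rw [if_neg]
        exact fun hc => hs (hc ▸ hbound g)
    have hP0 : P = 0 := (pow_eq_zero_iff hq.ne').mp hpq0
    apply hy
    funext j
    rw [Pi.zero_apply, ← hcoeffP j, hP0, coeff_zero]
  have expand : ∀ i : Fin m → Fin n, (∏ a, x (i a))
      = ∑ f : Fin m → (Fin q → Fin k),
          ∏ a, (if (∑ j, (f a j : ℕ)) = ((i a : Fin n) : ℕ) then ∏ j, y (f a j) else 0) := by
    intro i
    rw [hxdef]
    rw [Finset.prod_univ_sum, Fintype.piFinset_univ]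
  have If : (Fin m → Fin q → Fin k) → (Fin m → Fin n) :=
    fun f a => ⟨∑ j, (f a j : ℕ), hbound (f a)⟩
  have step1 : (∑ i : Fin m → Fin n, h (∑ j, (i j : ℕ)) * ∏ j, x (i j))
      = ∑ f : Fin m → (Fin q → Fin k),
          h (∑ a, ∑ j, (f a j : ℕ)) * ∏ a, ∏ j, y (f a j) := by
    simp only [expand, Finset.mul_sum]
    rw [Finset.sum_comm]
    apply Finset.sum_congr rfl
    intro f _
    rw [Fintype.sum_eq_single (fun a => (⟨∑ j, (f a j : ℕ), hbound (f a)⟩ : Fin n))]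
    · simp
    · intro i hi
      have : ∃ a, i a ≠ (⟨∑ j, (f a j : ℕ), hbound (f a)⟩ : Fin n) := by
        by_contra hcon
        push_neg at hcon
        exact hi (funext hcon)
      obtain ⟨a, ha⟩ := this
      rw [Finset.prod_eq_zero (Finset.mem_univ a), mul_zero]
      rw [if_neg]
      exact fun hc => ha (Fin.ext hc.symm)
  rw [show (∑ i : Fin (q * m) → Fin k, h (∑ j, (i j : ℕ)) * ∏ j, y (i j))
      = ∑ i : Fin m → Fin n, h (∑ j, (i j : ℕ)) * ∏ j, x (i j) from ?_]
  · exact hpd x hxne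
  rw [step1]
  have e2 : Fin m × Fin q ≃ Fin (q * m) := finProdFinEquiv.trans (finCongr (mul_comm m q))
  apply Fintype.sum_equiv ((e2.symm.arrowCongr (Equiv.refl (Fin k))).trans
    (Equiv.curry (Fin m) (Fin q) (Fin k)))
  intro i
  show h (∑ t, (i t : ℕ)) * ∏ t, y (i t)
      = h (∑ a, ∑ j, (i (e2 (a, j)) : ℕ)) * ∏ a, ∏ j, y (i (e2 (a, j)))
  rw [← Equiv.sum_comp e2 (fun t => (i t : ℕ)), ← Equiv.prod_comp e2 (fun t => y (i t)),
    Fintype.sum_prod_type, Fintype.prod_prod_type]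
end

section
/- Let m be even and q a positive integer. If the homogeneous polynomial x ↦ H_m x^m of the m-th order Hankel tensor generated by h is a sum of squares of polynomials, then the polynomial y ↦ H_{qm} y^{qm} of the (qm)-th order Hankel tensor with the same generating vector is also a sum of squares, with the number of squares needed no larger. -/
open Finset MvPolynomial

lemma aeval_eq_eval' {n : ℕ} (f : Fin n → ℝ) (φ : MvPolynomial (Fin n) ℝ) :
    MvPolynomial.aeval f φ = MvPolynomial.eval f φ := by
  rw [MvPolynomial.aeval_def, Algebra.algebraMap_self]
  rfl

theorem stmt6 (m q k n : ℕ) (hme : Even m) (hm : 0 < m) (hq : 0 < q) (hk : 0 < k)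
    (hn : n = q * (k - 1) + 1) (h : ℕ → ℝ)
    (r : ℕ) (p : Fin r → MvPolynomial (Fin n) ℝ)
    (hsos : ∀ x : Fin n → ℝ,
      ∑ i : Fin m → Fin n, h (∑ j, (i j : ℕ)) * ∏ j, x (i j)
        = ∑ i, (MvPolynomial.eval x (p i)) ^ 2) :
    ∃ r' ≤ r, ∃ p' : Fin r' → MvPolynomial (Fin k) ℝ,
      ∀ y : Fin k → ℝ,
        ∑ i : Fin (q * m) → Fin k, h (∑ j, (i j : ℕ)) * ∏ j, y (i j)
          = ∑ i, (MvPolynomial.eval y (p' i)) ^ 2 := by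
  -- the convolution polynomials
  set c : Fin n → MvPolynomial (Fin k) ℝ := fun s =>
    ∑ g ∈ Finset.univ.filter (fun g : Fin q → Fin k => ∑ t, (g t : ℕ) = (s : ℕ)),
      ∏ t, MvPolynomial.X (g t) with hc
  refine ⟨r, le_refl r, fun i => MvPolynomial.bind₁ c (p i), fun y => ?_⟩
  set x : Fin n → ℝ := fun s => MvPolynomial.eval y (c s) with hxdef
  have hx : ∀ s : Fin n, x s
      = ∑ g ∈ Finset.univ.filter (fun g : Fin q → Fin k => ∑ t, (g t : ℕ) = (s : ℕ)),
          ∏ t, y (g t) := by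
    intro s; simp [hxdef, hc]
  -- evaluation of the composed polynomials
  have heval : ∀ i, MvPolynomial.eval y (MvPolynomial.bind₁ c (p i))
      = MvPolynomial.eval x (p i) := by
    intro i
    have := MvPolynomial.aeval_bind₁ (R := ℝ) y c (p i)
    rw [aeval_eq_eval'] at this
    rw [this]
    have : (fun s => MvPolynomial.aeval y (c s)) = x := by
      funext s; rw [aeval_eq_eval']
    rw [this]
    rw [aeval_eq_eval']
  rw [show (∑ i, (MvPolynomial.eval y (MvPolynomial.bind₁ c (p i))) ^ 2)
      = ∑ i, (MvPolynomial.eval x (p i)) ^ 2 from by simp [heval], ← hsos x]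
  -- now the combinatorial identity
  set e1 : Fin (q * m) ≃ Fin m × Fin q :=
    (finProdFinEquiv (m := q) (n := m)).symm.trans (Equiv.prodComm _ _) with he1
  set E : (Fin (q * m) → Fin k) ≃ (Fin m → Fin q → Fin k) :=
    (Equiv.arrowCongr e1 (Equiv.refl (Fin k))).trans
      (Equiv.curry (Fin m) (Fin q) (Fin k)) with hE
  have step1 : ∑ i : Fin (q * m) → Fin k, h (∑ j, (i j : ℕ)) * ∏ j, y (i j)
      = ∑ F : Fin m → Fin q → Fin k, h (∑ j, ∑ t, (F j t : ℕ)) * ∏ j, ∏ t, y (F j t) := by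
    refine Fintype.sum_equiv E _ _ fun i => ?_
    have hA : (∑ j, (i j : ℕ)) = ∑ j : Fin m, ∑ t : Fin q, (i (e1.symm (j, t)) : ℕ) :=
      ((Equiv.sum_comp e1.symm fun a => ((i a : ℕ))).symm).trans
        (Fintype.sum_prod_type (fun p : Fin m × Fin q => (i (e1.symm p) : ℕ)))
    have hB : (∏ j, y (i j)) = ∏ j : Fin m, ∏ t : Fin q, y (i (e1.symm (j, t))) :=
      ((Equiv.prod_comp e1.symm fun a => y (i a)).symm).trans
        (Fintype.prod_prod_type (fun p : Fin m × Fin q => y (i (e1.symm p))))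
    rw [hA, hB]
    rfl
  rw [step1]
  -- degree-vector map
  have hbound : ∀ g : Fin q → Fin k, ∑ t, (g t : ℕ) < n := by
    intro g
    have : ∑ t, (g t : ℕ) ≤ ∑ _t : Fin q, (k - 1) :=
      Finset.sum_le_sum fun t _ => Nat.le_sub_one_of_lt (g t).isLt
    simpa [hn, Nat.lt_succ_iff, Finset.sum_const, mul_comm] using this
  set D : (Fin m → Fin q → Fin k) → (Fin m → Fin n) :=
    fun F j => ⟨∑ t, (F j t : ℕ), hbound (F j)⟩ with hD
  rw [← Finset.sum_fiberwise Finset.univ D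
    (fun F => h (∑ j, ∑ t, ((F j t : ℕ))) * ∏ j, ∏ t, y (F j t))]
  refine Finset.sum_congr rfl fun i _ => ?_
  have hfib : ∀ F ∈ Finset.univ.filter (fun F => D F = i),
      h (∑ j, ∑ t, ((F j t : ℕ))) * ∏ j, ∏ t, y (F j t)
        = h (∑ j, (i j : ℕ)) * ∏ j, ∏ t, y (F j t) := by
    intro F hF
    have hDF : D F = i := (Finset.mem_filter.mp hF).2
    have h2 : ∀ j, ∑ t, (F j t : ℕ) = (i j : ℕ) := by
      intro j; rw [← hDF]
    simp [h2]
  rw [Finset.sum_congr rfl hfib, ← Finset.mul_sum]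
  congr 1
  have hpx : ∏ j, x (i j)
      = ∑ F ∈ Fintype.piFinset (fun j =>
          Finset.univ.filter (fun g : Fin q → Fin k => ∑ t, (g t : ℕ) = (i j : ℕ))),
          ∏ j, ∏ t, y (F j t) := by
    simp only [hx]
    exact Finset.prod_univ_sum _ _
  rw [hpx]
  refine Finset.sum_congr ?_ fun _ _ => rfl
  ext F
  simp [hD, _root_.funext_iff, Fin.ext_iff, Fintype.mem_piFinset, eq_comm]
end

section
/- Let A be a real symmetric positive semi-definite n×n matrix of rank r, and u a nonzero vector in the range of A. Then there exists a unique α > 0 such that A − α u uᵀ is positive semi-definite of rank r − 1; explicitly, α = (uᵀ A⁺ u)⁻¹ where A⁺ is the Moore–Penrose pseudoinverse of A. -/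
open Matrix

/-- `B` is a Moore–Penrose pseudoinverse of `A`. -/
def IsMoorePenroseInv {n : ℕ} (A B : Matrix (Fin n) (Fin n) ℝ) : Prop :=
  A * B * A = A ∧ B * A * B = B ∧ (A * B)ᵀ = A * B ∧ (B * A)ᵀ = B * A

private lemma stmt8_vmv {n : ℕ} (u v x : Fin n → ℝ) : vecMulVec u v *ᵥ x = (v ⬝ᵥ x) • u := by
  ext i
  simp only [vecMulVec_apply, mulVec, dotProduct, Pi.smul_apply, smul_eq_mul, Finset.sum_mul,
    Finset.mul_sum]
  exact Finset.sum_congr rfl fun j _ => by ring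

private lemma stmt8_cs {n : ℕ} (A : Matrix (Fin n) (Fin n) ℝ) (hA : A.PosSemidef)
    (x y : Fin n → ℝ) :
    (x ⬝ᵥ A *ᵥ y)^2 ≤ (x ⬝ᵥ A *ᵥ x) * (y ⬝ᵥ A *ᵥ y) := by
  have hsym : Aᵀ = A := hA.1
  have symm_dot : ∀ a b : Fin n → ℝ, a ⬝ᵥ A *ᵥ b = b ⬝ᵥ A *ᵥ a := fun a b => by
    rw [dotProduct_mulVec, ← mulVec_transpose, hsym, dotProduct_comm]
  have key : ∀ s : ℝ, 0 ≤ (x ⬝ᵥ A *ᵥ x) * (s*s) + (2 * (x ⬝ᵥ A *ᵥ y)) * s + (y ⬝ᵥ A *ᵥ y) := by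
    intro s
    have h0 : (0:ℝ) ≤ (s • x + y) ⬝ᵥ A *ᵥ (s • x + y) := by simpa using hA.dotProduct_mulVec_nonneg (s • x + y)
    have hexp : (s • x + y) ⬝ᵥ A *ᵥ (s • x + y)
        = (x ⬝ᵥ A *ᵥ x) * (s*s) + (2*(x ⬝ᵥ A *ᵥ y)) * s + (y ⬝ᵥ A *ᵥ y) := by
      rw [mulVec_add, mulVec_smul, dotProduct_add, add_dotProduct, add_dotProduct,
        dotProduct_smul, smul_dotProduct, smul_dotProduct, dotProduct_smul,
        symm_dot y x]
      simp only [smul_eq_mul]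
      ring
    linarith [hexp ▸ h0]
  have h2 : discrim (x ⬝ᵥ A *ᵥ x) (2*(x ⬝ᵥ A *ᵥ y)) (y ⬝ᵥ A *ᵥ y) ≤ 0 := discrim_le_zero key
  rw [discrim] at h2
  nlinarith [h2]

private lemma stmt8_rank_nullity {n : ℕ} (M : Matrix (Fin n) (Fin n) ℝ) :
    M.rank + Module.finrank ℝ (LinearMap.ker M.mulVecLin) = n := by
  rw [Matrix.rank]
  simpa using LinearMap.finrank_range_add_finrank_ker M.mulVecLin

theorem stmt8 (n r : ℕ) (A : Matrix (Fin n) (Fin n) ℝ)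
    (hA : A.PosSemidef) (hrank : A.rank = r)
    (u : Fin n → ℝ) (hu0 : u ≠ 0) (hu : ∃ w, A *ᵥ w = u) :
    (∃! α : ℝ, 0 < α ∧ (A - α • Matrix.vecMulVec u u).PosSemidef ∧
      (A - α • Matrix.vecMulVec u u).rank = r - 1) ∧
    ∀ B : Matrix (Fin n) (Fin n) ℝ, IsMoorePenroseInv A B →
      0 < (u ⬝ᵥ B *ᵥ u)⁻¹ ∧
      (A - (u ⬝ᵥ B *ᵥ u)⁻¹ • Matrix.vecMulVec u u).PosSemidef ∧
      (A - (u ⬝ᵥ B *ᵥ u)⁻¹ • Matrix.vecMulVec u u).rank = r - 1 := by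
  obtain ⟨w, hw⟩ := hu
  have hsym : Aᵀ = A := hA.1
  have symm_dot : ∀ a b : Fin n → ℝ, a ⬝ᵥ A *ᵥ b = b ⬝ᵥ A *ᵥ a := fun a b => by
    rw [dotProduct_mulVec, ← mulVec_transpose, hsym, dotProduct_comm]
  set t : ℝ := w ⬝ᵥ u with ht_def
  have ht_eq : w ⬝ᵥ A *ᵥ w = t := by rw [hw]
  -- u ⬝ᵥ x = x ⬝ᵥ u = w ⬝ᵥ A *ᵥ x
  have hux : ∀ x : Fin n → ℝ, u ⬝ᵥ x = w ⬝ᵥ A *ᵥ x := fun x => by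
    rw [symm_dot w x, hw, dotProduct_comm]
  -- t > 0
  have htnn : 0 ≤ t := ht_eq ▸ (by simpa using hA.dotProduct_mulVec_nonneg w)
  have ht0 : t ≠ 0 := by
    intro h
    have hcs := stmt8_cs A hA w u
    rw [ht_eq, h, zero_mul] at hcs
    have hwu : w ⬝ᵥ A *ᵥ u = u ⬝ᵥ u := by rw [symm_dot w u, hw]
    rw [hwu] at hcs
    have hnn : 0 ≤ u ⬝ᵥ u := Finset.sum_nonneg fun i _ => mul_self_nonneg _
    have : u ⬝ᵥ u = 0 := le_antisymm (by nlinarith [hcs]) hnn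
    exact hu0 (by simpa using this)
  have ht : 0 < t := lt_of_le_of_ne htnn (Ne.symm ht0)
  have hw0 : w ≠ 0 := by
    intro h; apply hu0; rw [← hw, h]; simp
  -- kernel membership characterization
  have hker : ∀ (c : ℝ) (x : Fin n → ℝ),
      (A - c • vecMulVec u u) *ᵥ x = 0 ↔ A *ᵥ x = (c * (u ⬝ᵥ x)) • u := by
    intro c x
    rw [sub_mulVec, smul_mulVec, stmt8_vmv, sub_eq_zero, smul_smul]
  -- kernel equality when c * t ≠ 1
  have hker_ne : ∀ c : ℝ, c * t ≠ 1 →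
      LinearMap.ker (A - c • vecMulVec u u).mulVecLin = LinearMap.ker A.mulVecLin := by
    intro c hc
    ext x
    simp only [LinearMap.mem_ker, mulVecLin_apply, hker]
    constructor
    · intro h
      have h1 : u ⬝ᵥ x = c * (u ⬝ᵥ x) * t := by
        conv_lhs => rw [hux x, h]
        rw [dotProduct_smul, smul_eq_mul, ← ht_def]
      have h2 : u ⬝ᵥ x = 0 := by
        by_contra h2
        have h3 : (u ⬝ᵥ x) * (1 - c * t) = 0 := by linear_combination h1
        rcases mul_eq_zero.mp h3 with h4 | h4
        · exact h2 h4
        · exact hc (by linarith)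
      rw [h, h2]; simp
    · intro h
      have h2 : u ⬝ᵥ x = 0 := by rw [hux x, h, dotProduct_zero]
      rw [h, h2]; simp
  -- kernel equality for c = t⁻¹
  have hker_inv : LinearMap.ker (A - t⁻¹ • vecMulVec u u).mulVecLin
      = LinearMap.ker A.mulVecLin ⊔ Submodule.span ℝ {w} := by
    apply le_antisymm
    · intro x hx
      rw [LinearMap.mem_ker, mulVecLin_apply, hker] at hx
      have : A *ᵥ (x - (t⁻¹ * (u ⬝ᵥ x)) • w) = 0 := by
        rw [mulVec_sub, mulVec_smul, hw, hx, sub_self]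
      have hmem : x - (t⁻¹ * (u ⬝ᵥ x)) • w ∈ LinearMap.ker A.mulVecLin := by
        rwa [LinearMap.mem_ker, mulVecLin_apply]
      have : x = (x - (t⁻¹ * (u ⬝ᵥ x)) • w) + (t⁻¹ * (u ⬝ᵥ x)) • w := by ring_nf
      rw [this]
      exact Submodule.add_mem _ (Submodule.mem_sup_left hmem)
        (Submodule.mem_sup_right (Submodule.smul_mem _ _ (Submodule.mem_span_singleton_self w)))
    · apply sup_le
      · intro x hx
        rw [LinearMap.mem_ker, mulVecLin_apply] at hx ⊢
        rw [hker]
        have h2 : u ⬝ᵥ x = 0 := by rw [hux x, hx, dotProduct_zero]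
        rw [hx, h2]; simp
      · rw [Submodule.span_singleton_le_iff_mem, LinearMap.mem_ker, mulVecLin_apply, hker,
          hw]
        have : u ⬝ᵥ w = t := by rw [dotProduct_comm]
        rw [this, inv_mul_cancel₀ ht0, one_smul]
  -- finrank of the sup
  have hdisj : LinearMap.ker A.mulVecLin ⊓ Submodule.span ℝ {w} = ⊥ := by
    rw [Submodule.eq_bot_iff]
    intro x hx
    rw [Submodule.mem_inf] at hx
    obtain ⟨hx1, hx2⟩ := hx
    obtain ⟨d, rfl⟩ := Submodule.mem_span_singleton.mp hx2
    rw [LinearMap.mem_ker, mulVecLin_apply, mulVec_smul, hw] at hx1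
    rcases smul_eq_zero.mp hx1 with h | h
    · rw [h, zero_smul]
    · exact absurd h hu0
  have hfr_sup : Module.finrank ℝ (LinearMap.ker A.mulVecLin ⊔ Submodule.span ℝ {w} : Submodule ℝ (Fin n → ℝ))
      = Module.finrank ℝ (LinearMap.ker A.mulVecLin) + 1 := by
    have := Submodule.finrank_sup_add_finrank_inf_eq (LinearMap.ker A.mulVecLin)
      (Submodule.span ℝ {w})
    rw [hdisj, finrank_span_singleton hw0] at this
    simpa using this
  -- rank of A - t⁻¹ • uuᵀ
  have hrank_inv : (A - t⁻¹ • vecMulVec u u).rank + 1 = r := by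
    have h1 := stmt8_rank_nullity (A - t⁻¹ • vecMulVec u u)
    have h2 := stmt8_rank_nullity A
    rw [hker_inv, hfr_sup] at h1
    rw [hrank] at h2
    omega
  have hr1 : 1 ≤ r := by omega
  -- rank when c * t ≠ 1
  have hrank_ne : ∀ c : ℝ, c * t ≠ 1 → (A - c • vecMulVec u u).rank = r := by
    intro c hc
    have h1 := stmt8_rank_nullity (A - c • vecMulVec u u)
    have h2 := stmt8_rank_nullity A
    rw [hker_ne c hc] at h1
    rw [hrank] at h2
    omega
  -- PSD of A - t⁻¹ • uuᵀ
  have hherm : (A - t⁻¹ • vecMulVec u u).IsHermitian := by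
    have h1 : (vecMulVec u u)ᵀ = vecMulVec u u := by
      ext i j; simp [vecMulVec_apply, mul_comm]
    show (A - t⁻¹ • vecMulVec u u)ᵀ = _
    rw [transpose_sub, transpose_smul, hsym, h1]
  have hpsd : (A - t⁻¹ • vecMulVec u u).PosSemidef := by
    refine .of_dotProduct_mulVec_nonneg hherm fun x => ?_
    rw [star_trivial]
    have hcs := stmt8_cs A hA w x
    rw [ht_eq, ← hux x] at hcs
    have hq : (0:ℝ) ≤ x ⬝ᵥ A *ᵥ x := by simpa using hA.dotProduct_mulVec_nonneg x
    have hval : x ⬝ᵥ (A - t⁻¹ • vecMulVec u u) *ᵥ x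
        = x ⬝ᵥ A *ᵥ x - t⁻¹ * ((u ⬝ᵥ x) * (x ⬝ᵥ u)) := by
      rw [sub_mulVec, smul_mulVec, stmt8_vmv, dotProduct_sub, dotProduct_smul,
        dotProduct_smul]
      simp [mul_assoc]
    have hcomm : x ⬝ᵥ u = u ⬝ᵥ x := dotProduct_comm x u
    have hle : t⁻¹ * ((u ⬝ᵥ x) * (x ⬝ᵥ u)) ≤ x ⬝ᵥ A *ᵥ x := by
      have e1 : t⁻¹ * ((u ⬝ᵥ x)^2) ≤ t⁻¹ * (t * (x ⬝ᵥ A *ᵥ x)) :=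
        mul_le_mul_of_nonneg_left hcs (inv_nonneg.mpr htnn)
      have e2 : t⁻¹ * (t * (x ⬝ᵥ A *ᵥ x)) = x ⬝ᵥ A *ᵥ x := by
        field_simp
      rw [hcomm, ← sq]
      linarith
    simpa [hval] using sub_nonneg.mpr hle
  -- the three properties hold for t⁻¹
  have hprops : 0 < t⁻¹ ∧ (A - t⁻¹ • vecMulVec u u).PosSemidef ∧
      (A - t⁻¹ • vecMulVec u u).rank = r - 1 := ⟨inv_pos.mpr ht, hpsd, by omega⟩
  -- uniqueness
  have huniq : ∀ β : ℝ, (0 < β ∧ (A - β • vecMulVec u u).PosSemidef ∧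
      (A - β • vecMulVec u u).rank = r - 1) → β = t⁻¹ := by
    rintro β ⟨hβ, _, hβr⟩
    by_contra hne
    have hβt : β * t ≠ 1 := by
      intro h
      apply hne
      field_simp
      linarith [h]
    have := hrank_ne β hβt
    omega
  constructor
  · exact ⟨t⁻¹, hprops, huniq⟩
  · intro B hB
    have hBt : u ⬝ᵥ B *ᵥ u = t := by
      have dpmv : ∀ (M : Matrix (Fin n) (Fin n) ℝ) (v x : Fin n → ℝ),
          (M *ᵥ v) ⬝ᵥ x = v ⬝ᵥ (Mᵀ *ᵥ x) := fun M v x => by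
        rw [dotProduct_comm, dotProduct_mulVec, ← mulVec_transpose, dotProduct_comm]
      calc u ⬝ᵥ B *ᵥ u = (A *ᵥ w) ⬝ᵥ (B *ᵥ (A *ᵥ w)) := by rw [hw]
        _ = w ⬝ᵥ (Aᵀ *ᵥ (B *ᵥ (A *ᵥ w))) := dpmv A w _
        _ = w ⬝ᵥ ((A * B * A) *ᵥ w) := by
            rw [hsym, mulVec_mulVec, mulVec_mulVec, Matrix.mul_assoc]
        _ = w ⬝ᵥ A *ᵥ w := by rw [hB.1]
        _ = t := ht_eq
    rw [hBt]
    exact hprops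
end

section
/- Let H ∈ ℝ^{n×n} be a positive semi-definite Hankel matrix of rank r whose last column H(:,n) is a linear combination of the first n−1 columns. Then the leading r×r principal submatrix H(1:r,1:r) is positive definite. -/
open Finset Matrix in
lemma hankel_key (n : ℕ) (hn : 0 < n) (h : ℕ → ℝ)
    (H : Matrix (Fin n) (Fin n) ℝ)
    (hH : ∀ i j, H i j = h ((i : ℕ) + (j : ℕ)))
    (hdep : (fun i => H i ⟨n - 1, by omega⟩) ∈
      Submodule.span ℝ
        {w : Fin n → ℝ | ∃ j : Fin n, (j : ℕ) < n - 1 ∧ w = fun i => H i j})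
    (v : Fin n → ℝ) (hker : H *ᵥ v = 0) (k : ℕ) (hk : k < n)
    (hvk : v ⟨k, hk⟩ ≠ 0) (hsup : ∀ j : Fin n, k < (j : ℕ) → v j = 0) :
    H.rank ≤ k := by
  classical
  have hsym : ∀ i j : Fin n, H i j = H j i := fun i j => by
    rw [hH i j, hH j i, Nat.add_comm]
  set u : ℕ → ℝ := fun i => if hi : i < n then v ⟨i, hi⟩ else 0 with hu_def
  have hu : ∀ i, k < i → u i = 0 := by
    intro i hi
    by_cases hin : i < n
    · simp only [hu_def, dif_pos hin]
      exact hsup ⟨i, hin⟩ hi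
    · simp [hu_def, hin]
  have huk : u k ≠ 0 := by simpa [hu_def, dif_pos hk] using hvk
  set W : ℕ → ℕ → ℝ := fun m j => if m ≤ j ∧ j < n then u (j - m) else 0 with hW_def
  set w : ℕ → Fin n → ℝ := fun m j => W m (j : ℕ) with hw_def
  have hw0 : w 0 = v := by
    funext j
    simp [hw_def, hW_def, j.isLt, hu_def]
  have hmv : ∀ (m : ℕ) (i : Fin n),
      (H *ᵥ w m) i = ∑ j ∈ Finset.range n, h ((i : ℕ) + j) * W m j := by
    intro m i
    simp only [Matrix.mulVec, dotProduct, hH, hw_def]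
    exact Fin.sum_univ_eq_sum_range (fun j => h ((i : ℕ) + j) * W m j) n
  -- all shifts are in the kernel
  have hker' : ∀ m : ℕ, k + m ≤ n - 1 → H *ᵥ w m = 0 := by
    intro m
    induction m with
    | zero => intro _; rwa [hw0]
    | succ m IH =>
      intro hm
      have IH' : H *ᵥ w m = 0 := IH (by omega)
      have hn1 : n - 1 + 1 = n := by omega
      -- step 1 : rows below n-1
      have step1 : ∀ i : Fin n, (i : ℕ) < n - 1 → (H *ᵥ w (m + 1)) i = 0 := by
        intro i hi
        have hi1 : (i : ℕ) + 1 < n := by omega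
        have hsplit : ∀ f : ℕ → ℝ, ∑ j ∈ Finset.range n, f j
            = (∑ j ∈ Finset.range (n - 1), f (j + 1)) + f 0 := by
          intro f
          have := Finset.sum_range_succ' f (n - 1)
          rwa [hn1] at this
        have hsplit' : ∀ f : ℕ → ℝ, ∑ j ∈ Finset.range n, f j
            = (∑ j ∈ Finset.range (n - 1), f j) + f (n - 1) := by
          intro f
          have := Finset.sum_range_succ f (n - 1)
          rwa [hn1] at this
        have e1 : (H *ᵥ w (m + 1)) i = (H *ᵥ w m) ⟨(i : ℕ) + 1, hi1⟩ := by
          rw [hmv, hmv]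
          rw [hsplit (fun j => h ((i : ℕ) + j) * W (m + 1) j),
            hsplit' (fun j => h ((↑(⟨(i : ℕ) + 1, hi1⟩ : Fin n) : ℕ) + j) * W m j)]
          simp only []
          have hW0 : W (m + 1) 0 = 0 := by simp [hW_def]
          have hWn : W m (n - 1) = 0 := by
            by_cases hmn : m ≤ n - 1
            · have hc : m ≤ n - 1 ∧ n - 1 < n := ⟨hmn, by omega⟩
              simp only [hW_def, if_pos hc]
              exact hu _ (by omega)
            · simp [hW_def, hmn]
          rw [hW0, hWn, mul_zero, mul_zero, add_zero, add_zero]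
          refine Finset.sum_congr rfl fun j hj => ?_
          rw [Finset.mem_range] at hj
          have e2 : (i : ℕ) + (j + 1) = (i : ℕ) + 1 + j := by omega
          have e3 : W (m + 1) (j + 1) = W m j := by
            simp only [hW_def]
            by_cases hmj : m ≤ j ∧ j < n
            · rw [if_pos ⟨by omega, by omega⟩, if_pos hmj]
              congr 1
              omega
            · rw [if_neg (by omega), if_neg hmj]
          rw [e2, e3]
        rw [e1, IH']
        rfl
      -- step 2 : last row, via the dependency hypothesis
      have hlast : n - 1 < n := by omega
      have step2 : (H *ᵥ w (m + 1)) ⟨n - 1, hlast⟩ = 0 := by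
        have hdotall : ∀ c, c ∈ Submodule.span ℝ
            {t : Fin n → ℝ | ∃ j : Fin n, (j : ℕ) < n - 1 ∧ t = fun i => H i j} →
            c ⬝ᵥ w (m + 1) = 0 := by
          intro c hc
          induction hc using Submodule.span_induction with
          | mem c hc =>
            obtain ⟨j, hj, rfl⟩ := hc
            have : (fun i => H i j) ⬝ᵥ w (m + 1) = (H *ᵥ w (m + 1)) j := by
              simp only [Matrix.mulVec, dotProduct]
              exact Finset.sum_congr rfl fun t _ => by rw [hsym]
            rw [this, step1 j hj]
          | zero => simp
          | add c d _ _ hc hd => rw [add_dotProduct, hc, hd, add_zero]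
          | smul a c _ hc => rw [smul_dotProduct, hc, smul_zero]
        have hdot : (fun i => H i ⟨n - 1, by omega⟩) ⬝ᵥ w (m + 1) = 0 :=
          hdotall _ hdep
        calc (H *ᵥ w (m + 1)) ⟨n - 1, hlast⟩
            = (fun i => H i ⟨n - 1, hlast⟩) ⬝ᵥ w (m + 1) := by
              simp only [Matrix.mulVec, dotProduct]
              exact Finset.sum_congr rfl fun t _ => by rw [hsym]
          _ = 0 := hdot
      funext i
      rcases lt_or_ge (i : ℕ) (n - 1) with hi | hi
      · exact step1 i hi
      · have : i = ⟨n - 1, hlast⟩ := by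
          apply Fin.ext; simp only []; omega
        rw [this]; exact step2
  -- linear independence of the shifts
  have hLI : LinearIndependent ℝ (fun m : Fin (n - k) => w (m : ℕ)) := by
    rw [Fintype.linearIndependent_iff]
    intro g hg
    by_contra hcon
    push_neg at hcon
    obtain ⟨m0, hm0⟩ := hcon
    set s : Finset (Fin (n - k)) := Finset.univ.filter (fun m => g m ≠ 0) with hs_def
    have hsne : s.Nonempty := ⟨m0, by simp [hs_def, hm0]⟩
    set M := s.max' hsne with hM_def
    have hgM : g M ≠ 0 := by
      have := s.max'_mem hsne
      simp only [hs_def, Finset.mem_filter] at this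
      exact this.2
    have hmax : ∀ m, g m ≠ 0 → m ≤ M := fun m hm =>
      s.le_max' m (by simp [hs_def, hm])
    have hkM : k + (M : ℕ) < n := by have := M.isLt; omega
    have := congrFun hg ⟨k + (M : ℕ), hkM⟩
    rw [Finset.sum_apply] at this
    simp only [Pi.smul_apply, smul_eq_mul, Pi.zero_apply] at this
    rw [Finset.sum_eq_single M] at this
    · have hwM : w (M : ℕ) ⟨k + (M : ℕ), hkM⟩ = u k := by
        have hc : (M : ℕ) ≤ k + (M : ℕ) ∧ k + (M : ℕ) < n := ⟨Nat.le_add_left _ _, hkM⟩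
        simp only [hw_def, hW_def, if_pos hc]
        congr 1
        omega
      rw [hwM] at this
      exact mul_ne_zero hgM huk this
    · intro m _ hmM
      by_cases hgm : g m = 0
      · rw [hgm, zero_mul]
      · have hmM' : (m : ℕ) < (M : ℕ) := by
          have := hmax m hgm
          rcases lt_or_eq_of_le this with h' | h'
          · exact h'
          · exact absurd h' hmM
        have : w (m : ℕ) ⟨k + (M : ℕ), hkM⟩ = 0 := by
          have hc : (m : ℕ) ≤ k + (M : ℕ) ∧ k + (M : ℕ) < n := ⟨by omega, hkM⟩
          simp only [hw_def, hW_def, if_pos hc]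
          exact hu _ (by omega)
        rw [this, mul_zero]
    · intro hM; exact absurd (Finset.mem_univ M) hM
  -- conclude via rank-nullity
  have hkerfam : ∀ m : Fin (n - k), w (m : ℕ) ∈ LinearMap.ker H.mulVecLin := by
    intro m
    rw [LinearMap.mem_ker, Matrix.mulVecLin_apply]
    exact hker' (m : ℕ) (by have := m.isLt; omega)
  have hLI2 : LinearIndependent ℝ
      (fun m : Fin (n - k) => (⟨w (m : ℕ), hkerfam m⟩ : LinearMap.ker H.mulVecLin)) := by
    apply LinearIndependent.of_comp (LinearMap.ker H.mulVecLin).subtype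
    exact hLI
  have hdim : n - k ≤ Module.finrank ℝ (LinearMap.ker H.mulVecLin) := by
    simpa using hLI2.fintype_card_le_finrank
  have hrn : H.rank + Module.finrank ℝ (LinearMap.ker H.mulVecLin) = n := by
    rw [Matrix.rank]
    rw [LinearMap.finrank_range_add_finrank_ker H.mulVecLin]
    simp [Module.finrank_pi]
  omega

open Matrix Finset in
theorem stmt10 (n r : ℕ) (hn : 0 < n) (h : ℕ → ℝ)
    (H : Matrix (Fin n) (Fin n) ℝ)
    (hH : ∀ i j, H i j = h ((i : ℕ) + (j : ℕ)))
    (hpsd : H.PosSemidef) (hrank : H.rank = r)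
    (hdep : (fun i => H i ⟨n - 1, by omega⟩) ∈
      Submodule.span ℝ
        {w : Fin n → ℝ | ∃ j : Fin n, (j : ℕ) < n - 1 ∧ w = fun i => H i j}) :
    (Matrix.of fun i j : Fin r => h ((i : ℕ) + (j : ℕ))).PosDef := by
  classical
  have hrn : r ≤ n := by
    have h1 := H.rank_le_card_width
    rw [hrank] at h1
    simpa using h1
  set B : Matrix (Fin r) (Fin r) ℝ := Matrix.of fun i j : Fin r => h ((i : ℕ) + (j : ℕ))
      with hB_def
  have hherm : B.IsHermitian := by
    ext i j
    simp only [hB_def, Matrix.conjTranspose_apply, Matrix.of_apply, star_trivial]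
    rw [Nat.add_comm]
  refine Matrix.PosDef.of_dotProduct_mulVec_pos hherm fun x hx => ?_
  set X : ℕ → ℝ := fun i => if hi : i < r then x ⟨i, hi⟩ else 0 with hX_def
  set xt : Fin n → ℝ := fun i => X (i : ℕ) with hxt_def
  have hXr : ∀ t, r ≤ t → X t = 0 := by
    intro t ht
    simp [hX_def, Nat.not_lt.mpr ht]
  -- both quadratic forms equal the same range-r double sum
  have hQ : star x ⬝ᵥ B *ᵥ x = star xt ⬝ᵥ H *ᵥ xt := by
    have hsum : ∀ m, r ≤ m → (∑ j ∈ Finset.range m, (fun j => X j *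
        ∑ t ∈ Finset.range m, h (j + t) * X t) j)
        = ∑ j ∈ Finset.range r, X j * ∑ t ∈ Finset.range r, h (j + t) * X t := by
      intro m hm
      rw [← Finset.sum_subset (Finset.range_subset_range.mpr hm)
        (fun t _ ht => by rw [hXr t (by simpa using ht), zero_mul])]
      refine Finset.sum_congr rfl fun j _ => ?_
      congr 1
      rw [← Finset.sum_subset (Finset.range_subset_range.mpr hm)
        (fun t _ ht => by rw [hXr t (by simpa using ht), mul_zero])]
    have hL : star x ⬝ᵥ B *ᵥ x
        = ∑ j ∈ Finset.range r, X j * ∑ t ∈ Finset.range r, h (j + t) * X t := by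
      simp only [dotProduct, Matrix.mulVec, Pi.star_apply, star_trivial,
        hB_def, Matrix.of_apply]
      rw [← Fin.sum_univ_eq_sum_range (fun j => X j *
        ∑ t ∈ Finset.range r, h (j + t) * X t) r]
      refine Finset.sum_congr rfl fun j _ => ?_
      have hXj : X (j : ℕ) = x j := by simp [hX_def, j.isLt]
      rw [hXj]
      congr 1
      rw [← Fin.sum_univ_eq_sum_range (fun t => h ((j : ℕ) + t) * X t) r]
      refine Finset.sum_congr rfl fun t _ => ?_
      have hXt : X (t : ℕ) = x t := by simp [hX_def, t.isLt]
      rw [hXt]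
    have hR : star xt ⬝ᵥ H *ᵥ xt
        = ∑ j ∈ Finset.range n, X j * ∑ t ∈ Finset.range n, h (j + t) * X t := by
      simp only [dotProduct, Matrix.mulVec, Pi.star_apply, star_trivial,
        hxt_def, hH]
      rw [← Fin.sum_univ_eq_sum_range (fun j => X j *
        ∑ t ∈ Finset.range n, h (j + t) * X t) n]
      refine Finset.sum_congr rfl fun j _ => ?_
      congr 1
      rw [← Fin.sum_univ_eq_sum_range (fun t => h ((j : ℕ) + t) * X t) n]
    rw [hL, hR, hsum n hrn, hsum r le_rfl]
  have hnonneg : 0 ≤ star x ⬝ᵥ B *ᵥ x := by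
    rw [hQ]; exact hpsd.dotProduct_mulVec_nonneg xt
  rcases lt_or_eq_of_le hnonneg with hpos | heq
  · exact hpos
  exfalso
  -- the padded vector is in the kernel
  have hker : H *ᵥ xt = 0 := by
    rw [← hpsd.dotProduct_mulVec_zero_iff]
    exact (hQ ▸ heq).symm
  -- maximal support index
  obtain ⟨i0, hi0⟩ : ∃ i, x i ≠ 0 := Function.ne_iff.mp hx
  have hi0n : (i0 : ℕ) < n := lt_of_lt_of_le i0.isLt hrn
  have hxti0 : xt ⟨(i0 : ℕ), hi0n⟩ ≠ 0 := by
    simpa [hxt_def, hX_def, i0.isLt] using hi0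
  set s : Finset (Fin n) := Finset.univ.filter (fun i => xt i ≠ 0) with hs_def
  have hsne : s.Nonempty := ⟨⟨(i0 : ℕ), hi0n⟩, by simpa [hs_def] using hxti0⟩
  set K := s.max' hsne with hK_def
  have hvk : xt K ≠ 0 := by
    have := s.max'_mem hsne
    simpa [hs_def] using this
  have hsup : ∀ j : Fin n, (K : ℕ) < (j : ℕ) → xt j = 0 := by
    intro j hj
    by_contra hne
    have : j ≤ K := s.le_max' j (by simp [hs_def, hne])
    exact absurd hj (by omega)
  have hKr : (K : ℕ) < r := by
    by_contra hge
    exact hvk (hXr _ (Nat.le_of_not_lt hge))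
  have hle := hankel_key n hn h H hH hdep xt hker (K : ℕ) K.isLt
    (by simpa using hvk) hsup
  rw [hrank] at hle
  omega
end

section
/- A positive definite real Hankel matrix H ∈ ℝ^{n×n} admits a Vandermonde decomposition H = Σ_{k=1}^{n} α_k v_k v_kᵀ with all coefficients α_k > 0, where v_k = [1, ξ_k, ..., ξ_k^{n-1}]ᵀ for mutually distinct real ξ_k. -/
theorem stmt13 (n : ℕ) (hn : 0 < n) (h : ℕ → ℝ)
    (H : Matrix (Fin n) (Fin n) ℝ)
    (hH : ∀ i j, H i j = h ((i : ℕ) + (j : ℕ)))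
    (hpd : H.PosDef) :
    ∃ (ξ : Fin n → ℝ) (α : Fin n → ℝ),
      Function.Injective ξ ∧ (∀ k, 0 < α k) ∧
      H = ∑ k, α k • Matrix.vecMulVec (fun i : Fin n => ξ k ^ (i : ℕ))
            (fun i : Fin n => ξ k ^ (i : ℕ)) := by
  classical
  obtain ⟨R, hRR, hRherm⟩ : ∃ R : Matrix (Fin n) (Fin n) ℝ, R * R = H ∧ R.IsHermitian := by
    open scoped MatrixOrder in
    exact ⟨CFC.sqrt H, CFC.sqrt_mul_sqrt_self H hpd.posSemidef.nonneg,
      (Matrix.nonneg_iff_posSemidef.1 (CFC.sqrt_nonneg H)).isHermitian⟩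
  have hdetH : H.det ≠ 0 := ne_of_gt hpd.det_pos
  have hdetR : IsUnit R.det := by
    refine isUnit_iff_ne_zero.2 fun h0 => ?_
    have h1 : R.det * R.det = H.det := by rw [← Matrix.det_mul, hRR]
    rw [h0, mul_zero] at h1
    exact hdetH h1.symm
  -- the shifted Hankel matrix
  set G : Matrix (Fin n) (Fin n) ℝ :=
    Matrix.of (fun i j : Fin n => h ((i : ℕ) + (j : ℕ) + 1)) with hGdef
  have hGherm : G.IsHermitian := by
    ext i j
    simp only [Matrix.conjTranspose_apply, hGdef, Matrix.of_apply, star_trivial]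
    congr 1
    omega
  set M : Matrix (Fin n) (Fin n) ℝ := R⁻¹ * G * R⁻¹ with hMdef
  have hRinvherm : (R⁻¹).conjTranspose = R⁻¹ := by
    rw [Matrix.conjTranspose_nonsing_inv, hRherm.eq]
  have hMherm : M.IsHermitian := by
    show M.conjTranspose = M
    rw [hMdef, Matrix.conjTranspose_mul, Matrix.conjTranspose_mul, hRinvherm, hGherm.eq,
      mul_assoc]
  set U : Matrix (Fin n) (Fin n) ℝ := (hMherm.eigenvectorUnitary : Matrix (Fin n) (Fin n) ℝ)
    with hUdef
  set d : Fin n → ℝ := hMherm.eigenvalues with hddef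
  have hspec : M = U * Matrix.diagonal d * star U := by
    have := hMherm.spectral_theorem
    simpa [RCLike.ofReal_real_eq_id] using this
  have hUstar : U * star U = 1 := (Matrix.mem_unitaryGroup_iff).1 hMherm.eigenvectorUnitary.2
  have hstarU : star U * U = 1 := (Matrix.mem_unitaryGroup_iff').1 hMherm.eigenvectorUnitary.2
  have hdetU : IsUnit U.det := by
    refine IsUnit.of_mul_eq_one (a := U.det) (star U).det ?_
    rw [← Matrix.det_mul, hUstar, Matrix.det_one]
  set V : Matrix (Fin n) (Fin n) ℝ := R * U with hVdef
  have hdetV : IsUnit V.det := by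
    rw [hVdef, Matrix.det_mul]
    exact hdetR.mul hdetU
  have hstarV : star V = star U * R := by
    show V.conjTranspose = star U * R
    rw [hVdef, Matrix.conjTranspose_mul, hRherm.eq]
    rfl
  -- H = V * star V
  have hHV : H = V * star V := by
    rw [hVdef, hstarV,
      show R * U * (star U * R) = R * (U * star U) * R from by simp only [mul_assoc],
      hUstar, mul_one]
    exact hRR.symm
  -- G = V * diagonal d * star V
  have hGV : G = V * Matrix.diagonal d * star V := by
    have hGM : G = R * M * R := by
      rw [hMdef,
        show R * (R⁻¹ * G * R⁻¹) * R = (R * R⁻¹) * G * (R⁻¹ * R) from by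
          simp only [mul_assoc],
        Matrix.mul_nonsing_inv _ hdetR, Matrix.nonsing_inv_mul _ hdetR, one_mul, mul_one]
    rw [hGM, hspec, hVdef, hstarV]
    simp only [mul_assoc]
  set v : Fin n → Fin n → ℝ := fun k i => V i k with hvdef
  have hHe : ∀ i j, H i j = ∑ k, v k i * v k j := by
    intro i j
    rw [hHV]
    simp [Matrix.mul_apply, Matrix.star_apply, hvdef]
  have hGe : ∀ i j, G i j = ∑ k, (d k * v k i) * v k j := by
    intro i j
    rw [hGV]
    simp only [Matrix.mul_apply, Matrix.star_apply, star_trivial, Matrix.diagonal_apply,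
      mul_ite, mul_zero, Finset.sum_ite_eq, Finset.sum_ite_eq', Finset.mem_univ, if_true]
    refine Finset.sum_congr rfl fun k _ => ?_
    simp only [hvdef]
    ring
  -- the shift recurrence on columns of V
  have hstep : ∀ (i : Fin n) (hi : (i : ℕ) + 1 < n) (k : Fin n),
      v k ⟨(i : ℕ) + 1, hi⟩ = d k * v k i := by
    intro i hi
    have hrow : ∀ j, (∑ k, (d k * v k i) * V j k)
        = ∑ k, v k ⟨(i : ℕ) + 1, hi⟩ * V j k := by
      intro j
      have h1 : G i j = H ⟨(i : ℕ) + 1, hi⟩ j := by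
        rw [hGdef, hH]
        show h ((i : ℕ) + (j : ℕ) + 1) = h ((i : ℕ) + 1 + (j : ℕ))
        congr 1
        omega
      have h2 := hGe i j
      have h3 := hHe ⟨(i : ℕ) + 1, hi⟩ j
      rw [h1, h3] at h2
      simpa [hvdef] using h2.symm
    have hx : Matrix.vecMul (fun k => d k * v k i) V.transpose
        = Matrix.vecMul (fun k => v k ⟨(i : ℕ) + 1, hi⟩) V.transpose := by
      funext j
      simpa [Matrix.vecMul, dotProduct, Matrix.transpose_apply] using hrow j
    have hdetVT : IsUnit V.transpose.det := by rwa [Matrix.det_transpose]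
    have h4 := congrArg (fun z => Matrix.vecMul z V.transpose⁻¹) hx
    simp only [Matrix.vecMul_vecMul, Matrix.mul_nonsing_inv _ hdetVT, Matrix.vecMul_one] at h4
    intro k
    exact (congrFun h4 k).symm
  set z : Fin n := ⟨0, hn⟩ with hzdef
  have hgeo : ∀ (k : Fin n) (i : Fin n), v k i = v k z * d k ^ (i : ℕ) := by
    intro k i
    obtain ⟨m, hm⟩ := i
    induction m with
    | zero => simp [hzdef]
    | succ m ih =>
      have hm' : m < n := Nat.lt_of_succ_lt hm
      have hs := hstep ⟨m, hm'⟩ hm k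
      rw [show (⟨m + 1, hm⟩ : Fin n) = ⟨((⟨m, hm'⟩ : Fin n) : ℕ) + 1, hm⟩ from rfl, hs,
        ih hm']
      ring
  have hvz : ∀ k, v k z ≠ 0 := by
    intro k hk0
    have hcol : ∀ i, V i k = 0 := by
      intro i
      have := hgeo k i
      rw [hk0, zero_mul] at this
      exact this
    exact (isUnit_iff_ne_zero.1 hdetV) (Matrix.det_eq_zero_of_column_eq_zero k hcol)
  have hinj : Function.Injective d := by
    intro a b hab
    by_contra hne
    set y : Fin n → ℝ := Pi.single a (v b z) - Pi.single b (v a z) with hydef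
    have hVy : V.mulVec y = 0 := by
      rw [hydef, Matrix.mulVec_sub, Matrix.mulVec_single, Matrix.mulVec_single]
      funext i
      have h1 := hgeo a i
      have h2 := hgeo b i
      simp only [Pi.sub_apply, Pi.zero_apply, hvdef, Pi.smul_apply, Matrix.col_apply,
        MulOpposite.smul_eq_mul_unop, MulOpposite.unop_op] at h1 h2 ⊢
      rw [h1, h2, hab]
      ring
    have hy0 : y = 0 := by
      have := congrArg (fun w => V⁻¹.mulVec w) hVy
      simpa [Matrix.mulVec_mulVec, Matrix.nonsing_inv_mul _ hdetV] using this
    have := congrFun hy0 a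
    simp [hydef, Pi.single_apply, hne, Ne.symm hne] at this
    exact hvz b this
  refine ⟨d, fun k => (v k z) ^ 2, hinj, fun k => by have := hvz k; positivity, ?_⟩
  ext i j
  rw [hHe i j]
  rw [Matrix.sum_apply]
  refine Finset.sum_congr rfl fun k _ => ?_
  rw [hgeo k i, hgeo k j]
  simp [Matrix.vecMulVec_apply]
  ring
end

section
/- Let m be odd and let H be an m-th order n-dimensional real tensor of the form H = Σ_{k=1}^{r-1} α_k v_k^{∘m} + α_r e_n^{∘m} with all α_k ≥ 0, where each v_k = [1, ξ_k, ..., ξ_k^{n-1}]ᵀ. Then every H-eigenvalue of H is nonnegative. -/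
theorem stmt15 (d n r : ℕ) (hd : Even d) (hn : 0 < n)
    (ξ : Fin (r - 1) → ℝ) (α : Fin (r - 1) → ℝ) (β : ℝ)
    (hα : ∀ k, 0 ≤ α k) (hβ : 0 ≤ β)
    (T : (Fin (d + 1) → Fin n) → ℝ)
    (hT : ∀ i, T i = (∑ k, α k * ∏ j, ξ k ^ ((i j : ℕ)))
        + β * ∏ j, (if (i j : ℕ) = n - 1 then (1 : ℝ) else 0))
    (lam : ℝ) (x : Fin n → ℝ) (hx : x ≠ 0)
    (heig : ∀ i₁ : Fin n,
      ∑ i : Fin d → Fin n, T (Fin.cons i₁ i) * ∏ j, x (i j) = lam * x i₁ ^ d) :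
    0 ≤ lam := by
  set w : Fin (r - 1) → ℝ := fun k => ∑ a : Fin n, ξ k ^ (a : ℕ) * x a with hw
  set en : Fin n := ⟨n - 1, by omega⟩ with hen
  have key : ∀ i₁ : Fin n,
      (∑ k, α k * ξ k ^ (i₁ : ℕ) * (w k) ^ d)
        + β * (if (i₁ : ℕ) = n - 1 then x en ^ d else 0) = lam * x i₁ ^ d := by
    intro i₁
    rw [← heig i₁]
    have h1 : ∀ i : Fin d → Fin n,
        T (Fin.cons i₁ i) * ∏ j, x (i j)
          = (∑ k, α k * ξ k ^ (i₁ : ℕ) * ∏ j, (ξ k ^ ((i j : ℕ)) * x (i j)))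
            + β * (if (i₁ : ℕ) = n - 1 then (1:ℝ) else 0)
              * ∏ j, ((if (i j : ℕ) = n - 1 then (1 : ℝ) else 0) * x (i j)) := by
      intro i
      rw [hT]
      rw [add_mul, Finset.sum_mul]
      congr 1
      · refine Finset.sum_congr rfl fun k _ => ?_
        rw [Fin.prod_univ_succ]
        simp only [Fin.cons_zero, Fin.cons_succ, Finset.prod_mul_distrib]
        ring
      · rw [Fin.prod_univ_succ]
        simp only [Fin.cons_zero, Fin.cons_succ, Finset.prod_mul_distrib]
        ring
    rw [Finset.sum_congr rfl fun i _ => h1 i]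
    rw [Finset.sum_add_distrib, ← Finset.mul_sum]
    rw [Finset.sum_comm]
    congr 1
    · refine Finset.sum_congr rfl fun k _ => ?_
      rw [← Finset.mul_sum]
      have h3 := Fintype.sum_pow (fun a : Fin n => ξ k ^ (a : ℕ) * x a) d
      simp only [hw]
      rw [h3]
    · have h2 : ∑ a : Fin n, (if (a : ℕ) = n - 1 then (1 : ℝ) else 0) * x a = x en := by
        rw [Finset.sum_eq_single en]
        · simp [hen]
        · intro b _ hb
          have : ¬ ((b : ℕ) = n - 1) := by
            intro h; apply hb; apply Fin.ext; simp [hen, h]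
          simp [this]
        · simp
      have h4 := Fintype.sum_pow (fun a : Fin n => (if (a : ℕ) = n - 1 then (1:ℝ) else 0) * x a) d
      rw [← h4, h2]
      by_cases h : (i₁ : ℕ) = n - 1 <;> simp [h]
  by_contra hlam
  push_neg at hlam
  have hd0 : d ≠ 0 := by
    rintro rfl
    have hk := key ⟨0, hn⟩
    simp only [pow_zero, mul_one] at hk
    have hnn : ∀ k ∈ Finset.univ, (0:ℝ) ≤ α k := fun k _ => hα k
    have hβt : (0:ℝ) ≤ β * (if (0 : ℕ) = n - 1 then (1:ℝ) else 0) := by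
      by_cases h : (0 : ℕ) = n - 1 <;> simp [h, hβ]
    have := Finset.sum_nonneg hnn
    nlinarith [hk, hβt, this]
  have hzero : ∀ k, α k * (w k) ^ d = 0 := by
    have hk := key ⟨0, hn⟩
    simp only [Fin.val_mk, pow_zero, mul_one] at hk
    have hnn : ∀ k ∈ Finset.univ, (0:ℝ) ≤ α k * (w k) ^ d :=
      fun k _ => mul_nonneg (hα k) (hd.pow_nonneg _)
    have hβt : (0:ℝ) ≤ β * (if (0 : ℕ) = n - 1 then x en ^ d else 0) := by
      by_cases h : (0 : ℕ) = n - 1 <;>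
        simp [h, mul_nonneg hβ (hd.pow_nonneg _)]
    have hrhs : lam * x ⟨0, hn⟩ ^ d ≤ 0 :=
      mul_nonpos_of_nonpos_of_nonneg hlam.le (hd.pow_nonneg _)
    have hsum0 : ∑ k, α k * (w k) ^ d = 0 := by
      have hle : (0:ℝ) ≤ ∑ k, α k * (w k) ^ d := Finset.sum_nonneg hnn
      linarith [hk, hβt, hrhs]
    intro k
    exact (Finset.sum_eq_zero_iff_of_nonneg hnn).1 hsum0 k (Finset.mem_univ k)
  have hxz : ∀ i₁ : Fin n, x i₁ = 0 := by
    intro i₁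
    have hk := key i₁
    have hsum0 : ∑ k, α k * ξ k ^ (i₁ : ℕ) * (w k) ^ d = 0 := by
      apply Finset.sum_eq_zero
      intro k _
      linear_combination ξ k ^ (i₁ : ℕ) * hzero k
    rw [hsum0, zero_add] at hk
    have hβt : (0:ℝ) ≤ β * (if (i₁ : ℕ) = n - 1 then x en ^ d else 0) := by
      by_cases h : (i₁ : ℕ) = n - 1 <;>
        simp [h, mul_nonneg hβ (hd.pow_nonneg _)]
    rw [hk] at hβt
    have hxd : x i₁ ^ d = 0 := by
      nlinarith [hd.pow_nonneg (x i₁)]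
    exact pow_eq_zero_iff hd0 |>.1 hxd
  exact hx (funext hxz)
end

section
/- Let m be even, q a positive integer, and let H_m (order m, dimension n) and H_{qm} (order qm, dimension k, with n = q(k-1)+1) be Hankel tensors with the same generating vector. If H_{qm} is positive semi-definite, then λ_min(H_{qm}) ≥ c₁ · λ_min(H_m), where c₁ = min_{y ∈ ℝ^k, y≠0} ‖y^{∗q}‖_m^m / ‖y‖_{qm}^{qm} > 0 and λ_min denotes the minimal H-eigenvalue, characterized as λ_min(T) = min_{x≠0} T x^d / ‖x‖_d^d for an even order-d symmetric tensor T. -/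
noncomputable def conv (u v : ℕ → ℝ) : ℕ → ℝ :=
  fun k => ∑ j ∈ Finset.range (k + 1), u j * v (k - j)

noncomputable def convPow (x : ℕ → ℝ) : ℕ → ℕ → ℝ
  | 0 => fun k => if k = 0 then 1 else 0
  | j + 1 => conv (convPow x j) x

noncomputable def pad {n : ℕ} (x : Fin n → ℝ) : ℕ → ℝ :=
  fun j => if hj : j < n then x ⟨j, hj⟩ else 0

open Finset

lemma conv_eq_coeff (u v : ℕ → ℝ) (t : ℕ) :
    conv u v t = PowerSeries.coeff t (PowerSeries.mk u * PowerSeries.mk v) := by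
  rw [PowerSeries.coeff_mul, Finset.Nat.sum_antidiagonal_eq_sum_range_succ_mk]
  simp [conv]

lemma convPow_eq_coeff (z : ℕ → ℝ) (d t : ℕ) :
    convPow z d t = PowerSeries.coeff t ((PowerSeries.mk z) ^ d) := by
  induction d generalizing t with
  | zero => simp [convPow, PowerSeries.coeff_one]
  | succ d ih =>
    have hmk : PowerSeries.mk (convPow z d) = (PowerSeries.mk z) ^ d := by
      ext s; simp [ih]
    show conv (convPow z d) z t = _
    rw [conv_eq_coeff, hmk, pow_succ]

lemma convPow_mul_apply (z : ℕ → ℝ) (a b t : ℕ) :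
    convPow (convPow z a) b t = convPow z (a * b) t := by
  have hmk : PowerSeries.mk (convPow z a) = (PowerSeries.mk z) ^ a := by
    ext s; simp [convPow_eq_coeff]
  rw [convPow_eq_coeff, convPow_eq_coeff, hmk, ← pow_mul]

lemma convPow_support (z : ℕ → ℝ) (s : ℕ) (hz : ∀ j, s < j → z j = 0) :
    ∀ q t, q * s < t → convPow z q t = 0 := by
  intro q
  induction q with
  | zero => intro t ht; simp [convPow]; omega
  | succ q ih =>
    intro t ht
    show conv (convPow z q) z t = 0
    apply Finset.sum_eq_zero
    intro j hj
    simp only [Finset.mem_range] at hj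
    by_cases hjs : q * s < j
    · rw [ih j hjs, zero_mul]
    · push_neg at hjs
      have he : (q+1)*s = q*s + s := by ring
      rw [hz (t - j) (by omega), mul_zero]

lemma convPow_lead (z : ℕ → ℝ) (s : ℕ) (hz : ∀ j, s < j → z j = 0) :
    ∀ q, convPow z q (q * s) = (z s) ^ q := by
  intro q
  induction q with
  | zero => simp [convPow]
  | succ q ih =>
    show conv (convPow z q) z ((q+1) * s) = _
    rw [conv]
    rw [Finset.sum_eq_single (q * s)]
    · rw [ih]
      have : (q+1) * s - q * s = s := by
        have : (q+1)*s = q*s + s := by ring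
        omega
      rw [this, pow_succ]
    · intro j hj hne
      simp only [Finset.mem_range] at hj
      by_cases hjs : q * s < j
      · rw [convPow_support z s hz q j hjs, zero_mul]
      · push_neg at hjs
        have he : (q+1)*s = q*s + s := by ring
        rw [hz ((q+1)*s - j) (by omega), mul_zero]
    · intro hmem
      exfalso; apply hmem
      simp only [Finset.mem_range]
      have : (q+1)*s = q*s + s := by ring
      omega

lemma convsum (f u v : ℕ → ℝ) (A B : ℕ) (hu : ∀ j, A < j → u j = 0)
    (hv : ∀ j, B < j → v j = 0) :
    ∑ t ∈ Finset.range (A + B + 1), f t * conv u v t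
      = ∑ a ∈ Finset.range (A + 1), ∑ b ∈ Finset.range (B + 1), f (a + b) * u a * v b := by
  set R := A + B + 1 with hR
  have step1 : ∀ t ∈ Finset.range R, f t * conv u v t
      = ∑ j ∈ Finset.range R, if j ≤ t then f t * (u j * v (t - j)) else 0 := by
    intro t ht
    simp only [Finset.mem_range] at ht
    rw [conv, Finset.mul_sum]
    have hfil : Finset.range (t+1) = (Finset.range R).filter (fun j => j ≤ t) := by
      ext j; simp only [Finset.mem_range, Finset.mem_filter]; omega
    rw [hfil, Finset.sum_filter]
  rw [Finset.sum_congr rfl step1, Finset.sum_comm]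
  have step3 : ∀ j ∈ Finset.range R,
      (∑ t ∈ Finset.range R, if j ≤ t then f t * (u j * v (t - j)) else 0)
      = ∑ b ∈ Finset.range (R - j), f (j + b) * (u j * v b) := by
    intro j hj
    simp only [Finset.mem_range] at hj
    have hfil : (Finset.range R).filter (fun t => j ≤ t) = Finset.Ico j R := by
      ext t; simp only [Finset.mem_range, Finset.mem_filter, Finset.mem_Ico]; omega
    rw [← Finset.sum_filter, hfil, Finset.sum_Ico_eq_sum_range]
    apply Finset.sum_congr rfl
    intro b _
    rw [Nat.add_sub_cancel_left]
  rw [Finset.sum_congr rfl step3]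
  rw [← Finset.sum_subset (Finset.range_subset_range.mpr (by omega : A + 1 ≤ R))]
  · apply Finset.sum_congr rfl
    intro a ha
    simp only [Finset.mem_range] at ha
    rw [← Finset.sum_subset (Finset.range_subset_range.mpr (by omega : B + 1 ≤ R - a))]
    · exact Finset.sum_congr rfl fun b _ => by ring
    · intro b _ hb
      simp only [Finset.mem_range] at hb
      rw [hv b (by omega), mul_zero, mul_zero]
  · intro j _ hj
    simp only [Finset.mem_range] at hj
    apply Finset.sum_eq_zero
    intro b _
    rw [hu j (by omega), zero_mul, mul_zero]

lemma pad_support {N : ℕ} (x : Fin N → ℝ) : ∀ j, N - 1 < j → pad x j = 0 := by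
  intro j hj
  unfold pad
  rw [dif_neg (by omega)]

lemma pad_lt {N : ℕ} (x : Fin N → ℝ) (b : Fin N) : pad x (b : ℕ) = x b := by
  unfold pad
  rw [dif_pos b.isLt]

lemma master {N : ℕ} (hN : 0 < N) (x : Fin N → ℝ) :
    ∀ (d : ℕ) (f : ℕ → ℝ),
    ∑ i : Fin d → Fin N, f (∑ j, (i j : ℕ)) * ∏ j, x (i j)
      = ∑ s ∈ Finset.range (d * (N - 1) + 1), f s * convPow (pad x) d s := by
  intro d
  induction d with
  | zero =>
    intro f
    simp [convPow]
  | succ d ih =>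
    intro f
    have hz := pad_support x
    have hu := convPow_support (pad x) (N - 1) hz d
    have hN1 : N - 1 + 1 = N := by omega
    have key : ∀ b : Fin N,
        ∑ y : Fin d → Fin N, f (↑b + ∑ j, (y j : ℕ)) * (x b * ∏ j, x (y j))
        = ∑ a ∈ Finset.range (d * (N-1) + 1),
            f (a + ↑b) * convPow (pad x) d a * x b := by
      intro b
      calc ∑ y : Fin d → Fin N, f (↑b + ∑ j, (y j : ℕ)) * (x b * ∏ j, x (y j))
          = (∑ y : Fin d → Fin N, f (↑b + ∑ j, (y j : ℕ)) * ∏ j, x (y j)) * x b := by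
            rw [Finset.sum_mul]; exact Finset.sum_congr rfl fun y _ => by ring
        _ = (∑ a ∈ Finset.range (d * (N-1) + 1),
              f (↑b + a) * convPow (pad x) d a) * x b := by rw [ih (fun s => f (↑b + s))]
        _ = _ := by
            rw [Finset.sum_mul]
            exact Finset.sum_congr rfl fun a _ => by rw [Nat.add_comm (b : ℕ) a]
    calc ∑ i : Fin (d+1) → Fin N, f (∑ j, (i j : ℕ)) * ∏ j, x (i j)
        = ∑ p : Fin N × (Fin d → Fin N),
            f (↑p.1 + ∑ j, (p.2 j : ℕ)) * (x p.1 * ∏ j, x (p.2 j)) := by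
          rw [← Equiv.sum_comp (Fin.consEquiv (fun _ : Fin (d+1) => Fin N))
            (fun i : Fin (d+1) → Fin N => f (∑ j, (i j : ℕ)) * ∏ j, x (i j))]
          exact Finset.sum_congr rfl fun p _ => by
            simp [Fin.sum_univ_succ, Fin.prod_univ_succ]
      _ = ∑ b : Fin N, ∑ y : Fin d → Fin N,
            f (↑b + ∑ j, (y j : ℕ)) * (x b * ∏ j, x (y j)) :=
          Fintype.sum_prod_type (f := fun p : Fin N × (Fin d → Fin N) =>
            f (↑p.1 + ∑ j, (p.2 j : ℕ)) * (x p.1 * ∏ j, x (p.2 j)))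
      _ = ∑ b : Fin N, ∑ a ∈ Finset.range (d * (N-1) + 1),
            f (a + ↑b) * convPow (pad x) d a * x b :=
          Finset.sum_congr rfl fun b _ => key b
      _ = ∑ a ∈ Finset.range (d * (N-1) + 1), ∑ b : Fin N,
            f (a + ↑b) * convPow (pad x) d a * x b := Finset.sum_comm
      _ = ∑ a ∈ Finset.range (d * (N-1) + 1), ∑ b ∈ Finset.range N,
            f (a + b) * convPow (pad x) d a * pad x b := by
          refine Finset.sum_congr rfl fun a _ => ?_
          rw [← Fin.sum_univ_eq_sum_range
            (fun b => f (a + b) * convPow (pad x) d a * pad x b) N]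
          exact Finset.sum_congr rfl fun b _ => by rw [pad_lt]
      _ = ∑ t ∈ Finset.range (d * (N-1) + (N-1) + 1),
            f t * conv (convPow (pad x) d) (pad x) t := by
          rw [convsum f (convPow (pad x) d) (pad x) (d * (N-1)) (N-1) hu hz, hN1]
      _ = ∑ s ∈ Finset.range ((d+1) * (N - 1) + 1), f s * convPow (pad x) (d+1) s := by
          have hr : d * (N-1) + (N-1) + 1 = (d+1) * (N-1) + 1 := by ring_nf
          rw [hr]
          rfl

lemma sum_abs_pow_pos {N p : ℕ} (hp : 0 < p) (x : Fin N → ℝ) (hx : x ≠ 0) :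
    0 < ∑ i, |x i| ^ p := by
  obtain ⟨i, hi⟩ := Function.ne_iff.mp hx
  refine Finset.sum_pos' (fun j _ => by positivity) ⟨i, Finset.mem_univ i, ?_⟩
  have : 0 < |x i| := abs_pos.mpr hi
  positivity

theorem stmt17 (m q k n : ℕ) (hme : Even m) (hm : 0 < m) (hq : 0 < q) (hk : 0 < k)
    (hn : n = q * (k - 1) + 1) (h : ℕ → ℝ)
    (c₁ lamm lamqm : ℝ)
    (hc₁ : IsLeast {c : ℝ | ∃ y : Fin k → ℝ, y ≠ 0 ∧
      c = (∑ j ∈ Finset.range n, |convPow (pad y) q j| ^ m) / (∑ i, |y i| ^ (q * m))} c₁)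
    (hlamm : IsLeast {t : ℝ | ∃ x : Fin n → ℝ, x ≠ 0 ∧
      t = (∑ i : Fin m → Fin n, h (∑ j, (i j : ℕ)) * ∏ j, x (i j))
        / (∑ i, |x i| ^ m)} lamm)
    (hlamqm : IsLeast {t : ℝ | ∃ y : Fin k → ℝ, y ≠ 0 ∧
      t = (∑ i : Fin (q * m) → Fin k, h (∑ j, (i j : ℕ)) * ∏ j, y (i j))
        / (∑ i, |y i| ^ (q * m))} lamqm)
    (hpsd : ∀ y : Fin k → ℝ,
      0 ≤ ∑ i : Fin (q * m) → Fin k, h (∑ j, (i j : ℕ)) * ∏ j, y (i j)) :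
    0 < c₁ ∧ c₁ * lamm ≤ lamqm := by
  have hn0 : 0 < n := by omega
  have hqm : 0 < q * m := Nat.mul_pos hq hm
  -- the convolution image of a vector y
  set xof : (Fin k → ℝ) → (Fin n → ℝ) :=
    fun y i => convPow (pad y) q (i : ℕ) with hxof
  have hpadxof : ∀ y : Fin k → ℝ, pad (xof y) = convPow (pad y) q := by
    intro y
    funext j
    by_cases hj : j < n
    · have : pad (xof y) j = xof y ⟨j, hj⟩ := pad_lt (xof y) ⟨j, hj⟩
      rw [this]
    · rw [pad_support (xof y) j (by omega)]
      rw [convPow_support (pad y) (k - 1) (pad_support y) q j (by omega)]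
  -- the numerators agree
  have hnumer : ∀ y : Fin k → ℝ,
      (∑ i : Fin (q * m) → Fin k, h (∑ j, (i j : ℕ)) * ∏ j, y (i j))
      = ∑ i : Fin m → Fin n, h (∑ j, (i j : ℕ)) * ∏ j, xof y (i j) := by
    intro y
    rw [master hk y (q * m) h, master hn0 (xof y) m h]
    have hr : q * m * (k - 1) + 1 = m * (n - 1) + 1 := by
      have : n - 1 = q * (k - 1) := by omega
      rw [this]; ring_nf
    rw [hr]
    refine Finset.sum_congr rfl fun s _ => ?_
    rw [hpadxof y, convPow_mul_apply, Nat.mul_comm q m]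
  -- the c₁-numerator is the m-norm of xof y
  have hCx : ∀ y : Fin k → ℝ,
      (∑ j ∈ Finset.range n, |convPow (pad y) q j| ^ m) = ∑ i, |xof y i| ^ m := by
    intro y
    rw [← Fin.sum_univ_eq_sum_range (fun j => |convPow (pad y) q j| ^ m) n]
  -- xof y is nonzero when y is
  have hxne : ∀ y : Fin k → ℝ, y ≠ 0 → xof y ≠ 0 := by
    intro y hy
    obtain ⟨i, hi⟩ := Function.ne_iff.mp hy
    set S : Finset ℕ := (Finset.range k).filter (fun j => pad y j ≠ 0) with hS
    have hiS : (i : ℕ) ∈ S := by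
      simp only [hS, Finset.mem_filter, Finset.mem_range]
      exact ⟨i.isLt, by rw [pad_lt]; exact hi⟩
    have hSne : S.Nonempty := ⟨i, hiS⟩
    set s := S.max' hSne with hs
    have hsS : s ∈ S := S.max'_mem hSne
    have hsk : s < k := by
      have := hsS; simp only [hS, Finset.mem_filter, Finset.mem_range] at this
      exact this.1
    have hyz : pad y s ≠ 0 := by
      have := hsS; simp only [hS, Finset.mem_filter, Finset.mem_range] at this
      exact this.2
    have hzero : ∀ j, s < j → pad y j = 0 := by
      intro j hj
      by_cases hjk : j < k
      · by_contra hne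
        have hjS : j ∈ S := by
          simp only [hS, Finset.mem_filter, Finset.mem_range]
          exact ⟨hjk, hne⟩
        have := S.le_max' j hjS
        omega
      · exact pad_support y j (by omega)
    have hlead : convPow (pad y) q (q * s) = (pad y s) ^ q :=
      convPow_lead (pad y) s hzero q
    have hqs : q * s < n := by
      have : s ≤ k - 1 := by omega
      have : q * s ≤ q * (k - 1) := Nat.mul_le_mul_left q this
      omega
    intro h0
    have := congrFun h0 ⟨q * s, hqs⟩
    simp only [hxof, Pi.zero_apply] at this
    rw [hlead] at this
    exact pow_ne_zero q hyz this
  constructor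
  · -- c₁ > 0
    obtain ⟨⟨y0, hy0, hc0⟩, _⟩ := hc₁
    have hD0 : 0 < ∑ i, |y0 i| ^ (q * m) := sum_abs_pow_pos hqm y0 hy0
    have hC0 : 0 < ∑ j ∈ Finset.range n, |convPow (pad y0) q j| ^ m := by
      rw [hCx y0]
      exact sum_abs_pow_pos hm (xof y0) (hxne y0 hy0)
    rw [hc0]
    exact div_pos hC0 hD0
  · -- c₁ * lamm ≤ lamqm
    obtain ⟨⟨y0, hy0, hc0⟩, hclb⟩ := hc₁
    have hD0 : 0 < ∑ i, |y0 i| ^ (q * m) := sum_abs_pow_pos hqm y0 hy0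
    have hC0 : 0 < ∑ j ∈ Finset.range n, |convPow (pad y0) q j| ^ m := by
      rw [hCx y0]
      exact sum_abs_pow_pos hm (xof y0) (hxne y0 hy0)
    have hc1pos : 0 < c₁ := by rw [hc0]; exact div_pos hC0 hD0
    obtain ⟨⟨y1, hy1, hl1⟩, _⟩ := hlamqm
    have hD1 : 0 < ∑ i, |y1 i| ^ (q * m) := sum_abs_pow_pos hqm y1 hy1
    by_cases hlm : 0 ≤ lamm
    · -- main case
      set x1 := xof y1 with hx1def
      have hx1 : x1 ≠ 0 := hxne y1 hy1
      have hCx1 : 0 < ∑ i, |x1 i| ^ m := sum_abs_pow_pos hm x1 hx1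
      -- c₁ * D1 ≤ Cx1
      have h1 : c₁ ≤ (∑ j ∈ Finset.range n, |convPow (pad y1) q j| ^ m)
          / (∑ i, |y1 i| ^ (q * m)) := hclb ⟨y1, hy1, rfl⟩
      rw [hCx y1] at h1
      have h1' : c₁ * (∑ i, |y1 i| ^ (q * m)) ≤ ∑ i, |x1 i| ^ m :=
        (le_div_iff₀ hD1).mp h1
      -- lamm * Cx1 ≤ numerator of x1
      have h2 : lamm ≤ (∑ i : Fin m → Fin n, h (∑ j, (i j : ℕ)) * ∏ j, x1 (i j))
          / (∑ i, |x1 i| ^ m) := hlamm.2 ⟨x1, hx1, rfl⟩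
      have h2' : lamm * (∑ i, |x1 i| ^ m)
          ≤ ∑ i : Fin m → Fin n, h (∑ j, (i j : ℕ)) * ∏ j, x1 (i j) :=
        (le_div_iff₀ hCx1).mp h2
      rw [hl1, le_div_iff₀ hD1, hnumer y1]
      calc c₁ * lamm * (∑ i, |y1 i| ^ (q * m))
          = lamm * (c₁ * (∑ i, |y1 i| ^ (q * m))) := by ring
        _ ≤ lamm * (∑ i, |x1 i| ^ m) := mul_le_mul_of_nonneg_left h1' hlm
        _ ≤ _ := h2'
    · push_neg at hlm
      have hql : 0 ≤ lamqm := by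
        rw [hl1]
        exact div_nonneg (hpsd y1) (le_of_lt hD1)
      have : c₁ * lamm ≤ 0 := mul_nonpos_of_nonneg_of_nonpos (le_of_lt hc1pos) (le_of_lt hlm)
      linarith
end

section
/- An m-th order N-dimensional anti-circulant tensor C with compressed generating vector c ∈ ℂ^N is diagonalized by the N×N Fourier matrix: C = D ×₁ F_N ×₂ F_N ··· ×_m F_N, where D is the diagonal tensor whose diagonal entries are F_N* c / N (the inverse discrete Fourier transform of c). -/
open Complex Finset

lemma aux_sum_exp18 (N : ℕ) (hN : 0 < N) (k : ℤ) :
    ∑ t : Fin N, Complex.exp (2 * Real.pi * Complex.I * ((t:ℕ):ℂ) * (k:ℂ) / N)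
      = if (N:ℤ) ∣ k then (N:ℂ) else 0 := by
  have hNC : (N:ℂ) ≠ 0 := Nat.cast_ne_zero.mpr hN.ne'
  have h2 : (2 * (Real.pi:ℂ) * Complex.I) ≠ 0 := by
    simp [Real.pi_ne_zero, Complex.I_ne_zero]
  set x := Complex.exp (2 * Real.pi * Complex.I * (k:ℂ) / N) with hx
  have hterm : ∀ t : Fin N,
      Complex.exp (2 * Real.pi * Complex.I * ((t:ℕ):ℂ) * (k:ℂ) / N) = x ^ (t:ℕ) := by
    intro t
    rw [hx, ← Complex.exp_nat_mul]
    ring_nf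
  have hxN : x ^ N = 1 := by
    rw [hx, ← Complex.exp_nat_mul]
    have h : (N:ℂ) * (2 * Real.pi * Complex.I * (k:ℂ) / N) = (k:ℂ) * (2 * Real.pi * Complex.I) := by
      field_simp
    rw [h, Complex.exp_int_mul_two_pi_mul_I]
  simp_rw [hterm, Fin.sum_univ_eq_sum_range]
  by_cases hdvd : (N:ℤ) ∣ k
  · obtain ⟨q, hq⟩ := hdvd
    have hx1 : x = 1 := by
      rw [hx, hq]
      have h : 2 * (Real.pi:ℂ) * Complex.I * (((N:ℤ) * q : ℤ):ℂ) / N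
          = (q:ℂ) * (2 * Real.pi * Complex.I) := by
        push_cast; field_simp
      rw [h, Complex.exp_int_mul_two_pi_mul_I]
    simp [hx1, hq]
  · have hx1 : x ≠ 1 := by
      intro h
      rw [hx, Complex.exp_eq_one_iff] at h
      obtain ⟨n, hn⟩ := h
      apply hdvd
      refine ⟨n, ?_⟩
      have hk : (k:ℂ) = (N:ℂ) * n := by
        have h1 := congrArg (· * (N:ℂ)) hn
        simp only [div_mul_cancel₀ _ hNC] at h1
        have h' : (k:ℂ) * (2 * Real.pi * Complex.I) = ((N:ℂ) * n) * (2 * Real.pi * Complex.I) := by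
          linear_combination h1
        exact mul_right_cancel₀ h2 h'
      exact_mod_cast hk
    rw [geom_sum_eq hx1, hxN]
    simp [hdvd]

theorem stmt18 (m N : ℕ) (hN : 0 < N) (c : Fin N → ℂ)
    (C : (Fin m → Fin N) → ℂ)
    (hC : ∀ i, C i = c ⟨(∑ j, (i j : ℕ)) % N, Nat.mod_lt _ hN⟩)
    (d : Fin N → ℂ)
    (hd : ∀ t, d t = (1 / (N : ℂ)) * ∑ s : Fin N,
      Complex.exp (-(2 * Real.pi * Complex.I * ((t : ℕ) : ℂ) * ((s : ℕ) : ℂ) / (N : ℂ))) * c s) :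
    ∀ i : Fin m → Fin N,
      C i = ∑ t : Fin N, d t *
        ∏ j, Complex.exp (2 * Real.pi * Complex.I * ((t : ℕ) : ℂ) * (((i j : ℕ)) : ℂ) / (N : ℂ)) := by
  intro i
  have hNC : (N:ℂ) ≠ 0 := Nat.cast_ne_zero.mpr hN.ne'
  set S : ℕ := ∑ j, (i j : ℕ) with hS
  -- product of exponentials
  have hprod : ∀ t : Fin N,
      ∏ j, Complex.exp (2 * Real.pi * Complex.I * ((t:ℕ):ℂ) * (((i j : ℕ)):ℂ) / N)
        = Complex.exp (2 * Real.pi * Complex.I * ((t:ℕ):ℂ) * (S:ℂ) / N) := by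
    intro t
    rw [← Complex.exp_sum]
    congr 1
    rw [hS]
    push_cast
    rw [Finset.mul_sum, Finset.sum_div]
  have key : ∀ t : Fin N, ∀ s : Fin N,
      Complex.exp (-(2 * Real.pi * Complex.I * ((t:ℕ):ℂ) * ((s:ℕ):ℂ) / N))
        * Complex.exp (2 * Real.pi * Complex.I * ((t:ℕ):ℂ) * (S:ℂ) / N)
      = Complex.exp (2 * Real.pi * Complex.I * ((t:ℕ):ℂ) * (((S:ℤ) - (s:ℕ) : ℤ):ℂ) / N) := by
    intro t s
    rw [← Complex.exp_add]
    congr 1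
    push_cast
    ring
  calc C i = c ⟨S % N, Nat.mod_lt _ hN⟩ := hC i
    _ = ∑ t : Fin N, d t *
        ∏ j, Complex.exp (2 * Real.pi * Complex.I * ((t:ℕ):ℂ) * (((i j : ℕ)):ℂ) / N) := by
      simp_rw [hprod, hd]
      have step1 : ∀ t : Fin N,
          ((1/(N:ℂ)) * ∑ s : Fin N,
              Complex.exp (-(2*Real.pi*Complex.I*((t:ℕ):ℂ)*((s:ℕ):ℂ)/N)) * c s)
            * Complex.exp (2*Real.pi*Complex.I*((t:ℕ):ℂ)*(S:ℂ)/N)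
          = (1/(N:ℂ)) * ∑ s : Fin N,
              c s * Complex.exp (2*Real.pi*Complex.I*((t:ℕ):ℂ)*(((S:ℤ)-(s:ℕ):ℤ):ℂ)/N) := by
        intro t
        rw [mul_assoc, Finset.sum_mul]
        congr 1
        refine Finset.sum_congr rfl fun s _ => ?_
        rw [mul_comm (Complex.exp _) (c s), mul_assoc, key t s]
      simp_rw [step1]
      rw [← Finset.mul_sum, Finset.sum_comm]
      simp_rw [← Finset.mul_sum, aux_sum_exp18 N hN]
      have hcond : ∀ s : Fin N, ((N:ℤ) ∣ ((S:ℤ) - (s:ℕ))) ↔ s = ⟨S % N, Nat.mod_lt _ hN⟩ := by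
        intro s
        constructor
        · intro hdvd
          have : ((s:ℕ):ℤ) % N = (S:ℤ) % N := Int.modEq_iff_dvd.mpr hdvd
          have hs : ((s:ℕ):ℤ) % N = ((s:ℕ):ℤ) := Int.emod_eq_of_lt (by positivity) (by exact_mod_cast s.isLt)
          apply Fin.ext
          have h3 : ((s:ℕ):ℤ) = ((S % N : ℕ):ℤ) := by
            rw [← hs, this, Int.natCast_mod]
          exact_mod_cast h3
        · rintro rfl
          show (N:ℤ) ∣ (S:ℤ) - ((S % N : ℕ):ℤ)
          rw [Int.natCast_mod]
          exact Int.dvd_self_sub_of_emod_eq rfl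
      simp_rw [hcond, mul_ite, mul_zero, Finset.sum_ite_eq']
      simp only [Finset.mem_univ, if_true]
      field_simp
end
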